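/- If F : ℝ → ℝ is a function whose graph is a connected subset of ℝ², and F is discontinuous at a point a ∈ ℝ, then there exists a nondegenerate closed interval J ⊆ ℝ such that {a} × J is contained in the closure of the graph of F in ℝ². -/

import Mathlib

open Set

private lemma darboux1 (F : ℝ → ℝ)
    (hconn : IsPreconnected {p : ℝ × ℝ | p.2 = F p.1})
    {p q y : ℝ} (hpq : p < q) (h1 : F p < y) (h2 : y < F q) :
    ∃ z, p ≤ z ∧ z ≤ q ∧ F z = y := by
  by_contra h
  push_neg at h
  set G := {w : ℝ × ℝ | w.2 = F w.1} with hG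
  set U : Set (ℝ × ℝ) := {w | w.1 < q ∧ w.2 < y} ∪ {w | w.1 < p} with hUdef
  set V : Set (ℝ × ℝ) := {w | p < w.1 ∧ y < w.2} ∪ {w | q < w.1} with hVdef
  have hU : IsOpen U := ((isOpen_lt continuous_fst continuous_const).inter
      (isOpen_lt continuous_snd continuous_const)).union
      (isOpen_lt continuous_fst continuous_const)
  have hV : IsOpen V := ((isOpen_lt continuous_const continuous_fst).inter
      (isOpen_lt continuous_const continuous_snd)).union
      (isOpen_lt continuous_const continuous_fst)
  have hcover : G ⊆ U ∪ V := by
    rintro ⟨x, t⟩ ht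
    simp only [hG, mem_setOf_eq] at ht
    subst ht
    rcases lt_or_ge x p with hx | hx
    · exact Or.inl (Or.inr hx)
    rcases lt_or_ge q x with hx' | hx'
    · exact Or.inr (Or.inr hx')
    have hne := h x hx hx'
    rcases hne.lt_or_gt with hlt | hlt
    · left; left
      refine ⟨lt_of_le_of_ne hx' ?_, hlt⟩
      rintro rfl
      exact absurd hlt (not_lt.2 h2.le)
    · right; left
      refine ⟨lt_of_le_of_ne hx ?_, hlt⟩
      rintro rfl
      exact absurd hlt (not_lt.2 h1.le)
  have hne1 : (G ∩ U).Nonempty := ⟨(p, F p), rfl, Or.inl ⟨hpq, h1⟩⟩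
  have hne2 : (G ∩ V).Nonempty := ⟨(q, F q), rfl, Or.inl ⟨hpq, h2⟩⟩
  obtain ⟨w, -, hwU, hwV⟩ := hconn U V hU hV hcover hne1 hne2
  rcases hwU with ⟨hw1, hw2⟩ | hw1 <;> rcases hwV with ⟨hw1', hw2'⟩ | hw1' <;>
    simp -failIfUnchanged only [mem_setOf_eq] at * <;> linarith

private lemma darboux2 (F : ℝ → ℝ)
    (hconn : IsPreconnected {p : ℝ × ℝ | p.2 = F p.1})
    {p q y : ℝ} (hpq : p < q) (h1 : y < F p) (h2 : F q < y) :
    ∃ z, p ≤ z ∧ z ≤ q ∧ F z = y := by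
  by_contra h
  push_neg at h
  set G := {w : ℝ × ℝ | w.2 = F w.1} with hG
  set U : Set (ℝ × ℝ) := {w | w.1 < q ∧ y < w.2} ∪ {w | w.1 < p} with hUdef
  set V : Set (ℝ × ℝ) := {w | p < w.1 ∧ w.2 < y} ∪ {w | q < w.1} with hVdef
  have hU : IsOpen U := ((isOpen_lt continuous_fst continuous_const).inter
      (isOpen_lt continuous_const continuous_snd)).union
      (isOpen_lt continuous_fst continuous_const)
  have hV : IsOpen V := ((isOpen_lt continuous_const continuous_fst).inter
      (isOpen_lt continuous_snd continuous_const)).union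
      (isOpen_lt continuous_const continuous_fst)
  have hcover : G ⊆ U ∪ V := by
    rintro ⟨x, t⟩ ht
    simp only [hG, mem_setOf_eq] at ht
    subst ht
    rcases lt_or_ge x p with hx | hx
    · exact Or.inl (Or.inr hx)
    rcases lt_or_ge q x with hx' | hx'
    · exact Or.inr (Or.inr hx')
    have hne := h x hx hx'
    rcases hne.lt_or_gt with hlt | hlt
    · right; left
      refine ⟨lt_of_le_of_ne hx ?_, hlt⟩
      rintro rfl
      exact absurd hlt (not_lt.2 h1.le)
    · left; left
      refine ⟨lt_of_le_of_ne hx' ?_, hlt⟩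
      rintro rfl
      exact absurd hlt (not_lt.2 h2.le)
  have hne1 : (G ∩ U).Nonempty := ⟨(p, F p), rfl, Or.inl ⟨hpq, h1⟩⟩
  have hne2 : (G ∩ V).Nonempty := ⟨(q, F q), rfl, Or.inl ⟨hpq, h2⟩⟩
  obtain ⟨w, -, hwU, hwV⟩ := hconn U V hU hV hcover hne1 hne2
  rcases hwU with ⟨hw1, hw2⟩ | hw1 <;> rcases hwV with ⟨hw1', hw2'⟩ | hw1' <;>
    simp -failIfUnchanged only [mem_setOf_eq] at * <;> linarith

private lemma vert (F : ℝ → ℝ) (a y : ℝ)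
    (hy : ∀ r > (0 : ℝ), ∃ z, |z - a| < r ∧ F z = y) :
    (a, y) ∈ closure {p : ℝ × ℝ | p.2 = F p.1} := by
  rw [Metric.mem_closure_iff]
  intro r hr
  obtain ⟨z, hz1, hz2⟩ := hy r hr
  refine ⟨(z, y), hz2.symm, ?_⟩
  rw [Prod.dist_eq]
  simp only [dist_self]
  rw [max_lt_iff]
  refine ⟨?_, hr⟩
  rw [Real.dist_eq, abs_sub_comm]
  exact hz1

theorem stmt_9 (F : ℝ → ℝ)
    (hconn : IsConnected {p : ℝ × ℝ | p.2 = F p.1})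
    (a : ℝ) (ha : ¬ ContinuousAt F a) :
    ∃ c d : ℝ, c < d ∧
      ({a} : Set ℝ) ×ˢ Set.Icc c d ⊆ closure {p : ℝ × ℝ | p.2 = F p.1} := by
  have hpc := hconn.isPreconnected
  rw [Metric.continuousAt_iff] at ha
  push_neg at ha
  obtain ⟨ε, hε, hd⟩ := ha
  simp only [Real.dist_eq] at hd
  by_cases hup : ∀ δ > (0 : ℝ), ∃ x, |x - a| < δ ∧ F a + ε ≤ F x
  · refine ⟨F a, F a + ε / 2, by linarith, ?_⟩
    rintro ⟨u, y⟩ huy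
    rw [Set.mem_prod, Set.mem_singleton_iff] at huy
    obtain ⟨rfl, hy⟩ := huy
    dsimp only at *
    rcases eq_or_lt_of_le hy.1 with heq | hlt
    · exact subset_closure (show y = F u from heq.symm)
    · apply vert
      intro r hr
      obtain ⟨x, hx1, hx2⟩ := hup r hr
      have hyx : y < F x := by linarith [hy.2]
      have habs := abs_lt.1 hx1
      rcases lt_trichotomy x u with hxa | hxa | hxa
      · obtain ⟨z, hz1, hz2, hz3⟩ := darboux2 F hpc hxa hyx hlt
        refine ⟨z, ?_, hz3⟩
        rw [abs_lt]; constructor <;> linarith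
      · subst hxa; linarith
      · obtain ⟨z, hz1, hz2, hz3⟩ := darboux1 F hpc hxa hlt hyx
        refine ⟨z, ?_, hz3⟩
        rw [abs_lt]; constructor <;> linarith
  · push_neg at hup
    obtain ⟨δ₀, hδ₀, hbound⟩ := hup
    have hdown : ∀ δ > (0 : ℝ), ∃ x, |x - a| < δ ∧ F x ≤ F a - ε := by
      intro δ hδ
      obtain ⟨x, hx1, hx2⟩ := hd (min δ δ₀) (lt_min hδ hδ₀)
      have hxδ₀ : |x - a| < δ₀ := lt_of_lt_of_le hx1 (min_le_right _ _)
      have hb := hbound x hxδ₀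
      rcases le_abs.1 hx2 with h' | h'
      · linarith
      · exact ⟨x, lt_of_lt_of_le hx1 (min_le_left _ _), by linarith⟩
    refine ⟨F a - ε / 2, F a, by linarith, ?_⟩
    rintro ⟨u, y⟩ huy
    rw [Set.mem_prod, Set.mem_singleton_iff] at huy
    obtain ⟨rfl, hy⟩ := huy
    dsimp only at *
    rcases eq_or_lt_of_le hy.2 with heq | hlt
    · exact subset_closure (show y = F u from heq)
    · apply vert
      intro r hr
      obtain ⟨x, hx1, hx2⟩ := hdown r hr
      have hyx : F x < y := by linarith [hy.1]
      have habs := abs_lt.1 hx1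
      rcases lt_trichotomy x u with hxa | hxa | hxa
      · obtain ⟨z, hz1, hz2, hz3⟩ := darboux1 F hpc hxa hyx hlt
        refine ⟨z, ?_, hz3⟩
        rw [abs_lt]; constructor <;> linarith
      · subst hxa; linarith
      · obtain ⟨z, hz1, hz2, hz3⟩ := darboux2 F hpc hxa hlt hyx
        refine ⟨z, ?_, hz3⟩
        rw [abs_lt]; constructor <;> linarith
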